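/- Let τ ∈ ℂ, let K₀, K₁ be natural numbers and M₀, M₁ ≥ 0 real numbers. Consider the two-level telescopic projective forward Euler method whose inner (level-0) integrator is multiplication by τ, whose level-1 integrator is projective forward Euler with K₀+1 inner steps and extrapolation ratio M₀, and whose level-2 (outer) integrator is projective forward Euler with K₁+1 level-1 steps and extrapolation ratio M₁. Then one outer step is multiplication by the composite amplification factor σ₂(τ) = σ₁(τ)^{K₁} · ((M₁+1)σ₁(τ) − M₁), where σ₁(τ) = τ^{K₀}((M₀+1)τ − M₀). Moreover, if |(M₁+1)σ₁(τ) − M₁| ≤ 1 then |σ₂(τ)| ≤ 1. -/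

import Mathlib

/-- Two-level telescopic projective forward Euler: if the innermost integrator is
multiplication by `τ`, the level-1 integrator is projective forward Euler with
`K₀+1` inner steps and extrapolation ratio `M₀`, and the outer integrator is
projective forward Euler with `K₁+1` level-1 steps and extrapolation ratio `M₁`,
then one outer step is multiplication by the composite amplification factor
`σ₂(τ) = σ₁(τ)^{K₁}((M₁+1)σ₁(τ) − M₁)` with `σ₁(τ) = τ^{K₀}((M₀+1)τ − M₀)`;
moreover `|(M₁+1)σ₁(τ) − M₁| ≤ 1` implies `|σ₂(τ)| ≤ 1`. -/
theorem telescopic_projective_forward_euler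
    (τ : ℂ) (K₀ K₁ : ℕ) (M₀ M₁ : ℝ) (hM₀ : 0 ≤ M₀) (hM₁ : 0 ≤ M₁)
    (P₁ : ℂ → ℂ)
    (hP₁ : ∀ w, P₁ w = τ ^ (K₀ + 1) * w
      + (M₀ : ℂ) * (τ ^ (K₀ + 1) * w - τ ^ K₀ * w))
    (P₂ : ℂ → ℂ)
    (hP₂ : ∀ w, P₂ w = P₁^[K₁ + 1] w
      + (M₁ : ℂ) * (P₁^[K₁ + 1] w - P₁^[K₁] w))
    (σ₁ σ₂ : ℂ)
    (hσ₁ : σ₁ = τ ^ K₀ * (((M₀ : ℂ) + 1) * τ - (M₀ : ℂ)))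
    (hσ₂ : σ₂ = σ₁ ^ K₁ * (((M₁ : ℂ) + 1) * σ₁ - (M₁ : ℂ))) :
    (∀ w, P₂ w = σ₂ * w) ∧
    (‖((M₁ : ℂ) + 1) * σ₁ - (M₁ : ℂ)‖ ≤ 1 → ‖σ₂‖ ≤ 1) := by
  have h1 : ∀ w, P₁ w = σ₁ * w := by
    intro w
    rw [hP₁, hσ₁]
    ring
  have hiter : ∀ n w, P₁^[n] w = σ₁ ^ n * w := by
    intro n
    induction n with
    | zero => intro w; simp
    | succ n ih =>
      intro w
      rw [Function.iterate_succ_apply', ih, h1, pow_succ]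
      ring
  have h2 : ∀ w, P₂ w = σ₂ * w := by
    intro w
    rw [hP₂, hiter, hiter, hσ₂, pow_succ]
    ring
  refine ⟨h2, fun h => ?_⟩
  have hσ₁le : ‖σ₁‖ ≤ 1 := by
    have := norm_sub_norm_le (((M₁ : ℂ) + 1) * σ₁) (M₁ : ℂ)
    have h3 : ‖((M₁ : ℂ) + 1) * σ₁‖ = (M₁ + 1) * ‖σ₁‖ := by
      rw [norm_mul]
      congr 1
      rw [show ((M₁ : ℂ) + 1) = ((M₁ + 1 : ℝ) : ℂ) by push_cast; ring,
        Complex.norm_real, Real.norm_eq_abs, abs_of_nonneg (by linarith)]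
    have h4 : ‖((M₁ : ℂ))‖ = M₁ := by
      rw [Complex.norm_real, Real.norm_eq_abs, abs_of_nonneg hM₁]
    nlinarith [this, norm_nonneg σ₁]
  rw [hσ₂, norm_mul, norm_pow]
  calc ‖σ₁‖ ^ K₁ * ‖((M₁ : ℂ) + 1) * σ₁ - (M₁ : ℂ)‖
      ≤ 1 * 1 := by
        apply mul_le_mul _ h (norm_nonneg _) zero_le_one
        exact pow_le_one₀ (norm_nonneg _) hσ₁le
    _ = 1 := by ring
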